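/- Let r_1, r_2, r_3, r_4 be pairwise coprime positive integers. Then for any finite group G, the 4-tuple (3r_1, 3r_2, 3r_3, 3r_4) is not G-harmonic; i.e. there do not exist subgroups U_1, U_2, U_3, U_4 of G with [G:U_i] = 3r_i for i = 1, 2, 3, 4 and elements g_1, g_2, g_3, g_4 ∈ G such that the cosets g_1U_1, g_2U_2, g_3U_3, g_4U_4 are pairwise disjoint. -/

import Mathlib

open scoped Pointwise

namespace NotGHarmonic

variable {G : Type*} [Group G]

/-- The natural map `G ⧸ (A ⊓ B) → G ⧸ A × G ⧸ B`. -/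
def qpair (A B : Subgroup G) (q : G ⧸ (A ⊓ B)) : (G ⧸ A) × (G ⧸ B) :=
  Quotient.liftOn' q (fun g => ((g : G ⧸ A), (g : G ⧸ B)))
    (by
      intro x y h
      rw [QuotientGroup.leftRel_apply] at h
      obtain ⟨hA, hB⟩ := Subgroup.mem_inf.mp h
      exact Prod.ext (QuotientGroup.eq.mpr hA) (QuotientGroup.eq.mpr hB))

lemma qpair_injective (A B : Subgroup G) : Function.Injective (qpair A B) := by
  intro q₁ q₂ h
  induction q₁ using Quotient.inductionOn'
  induction q₂ using Quotient.inductionOn'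
  rename_i x y
  have h1 : (x : G ⧸ A) = (y : G ⧸ A) := congrArg Prod.fst h
  have h2 : (x : G ⧸ B) = (y : G ⧸ B) := congrArg Prod.snd h
  have hm : x⁻¹ * y ∈ A ⊓ B :=
    Subgroup.mem_inf.mpr ⟨QuotientGroup.eq.mp h1, QuotientGroup.eq.mp h2⟩
  exact Quotient.sound' (QuotientGroup.leftRel_apply.mpr hm)

lemma index_inf_le_mul [Finite G] (A B : Subgroup G) :
    (A ⊓ B).index ≤ A.index * B.index := by
  rw [Subgroup.index_eq_card, Subgroup.index_eq_card, Subgroup.index_eq_card, ← Nat.card_prod]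
  exact Nat.card_le_card_of_injective _ (qpair_injective A B)

/-- If the index of the intersection equals the product of indices, any two cosets meet. -/
lemma meet_of_index_inf_eq [Finite G] (A B : Subgroup G)
    (h : (A ⊓ B).index = A.index * B.index) (g x : G) :
    ∃ z, z ∈ g • (A : Set G) ∧ z ∈ x • (B : Set G) := by
  have hcard : Nat.card (G ⧸ (A ⊓ B)) = Nat.card ((G ⧸ A) × (G ⧸ B)) := by
    rw [Nat.card_prod, ← Subgroup.index_eq_card, ← Subgroup.index_eq_card,
      ← Subgroup.index_eq_card, h]
  have hbij : Function.Bijective (qpair A B) :=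
    (Nat.bijective_iff_injective_and_card _).mpr ⟨qpair_injective A B, hcard⟩
  obtain ⟨q, hq⟩ := hbij.surjective ((g : G ⧸ A), (x : G ⧸ B))
  induction q using Quotient.inductionOn'
  rename_i z
  have h1 : (z : G ⧸ A) = (g : G ⧸ A) := congrArg Prod.fst hq
  have h2 : (z : G ⧸ B) = (x : G ⧸ B) := congrArg Prod.snd hq
  have hA : g⁻¹ * z ∈ A := by
    have := QuotientGroup.eq.mp h1
    have h' := inv_mem this
    simpa [mul_inv_rev] using h'
  have hB : x⁻¹ * z ∈ B := by
    have := QuotientGroup.eq.mp h2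
    have h' := inv_mem this
    simpa [mul_inv_rev] using h'
  refine ⟨z, ?_, ?_⟩
  · rw [Set.mem_smul_set_iff_inv_smul_mem, smul_eq_mul]; exact hA
  · rw [Set.mem_smul_set_iff_inv_smul_mem, smul_eq_mul]; exact hB

lemma index_inf_ne_of_disjoint [Finite G] {A B : Subgroup G} {g x : G}
    (d : Disjoint (g • (A : Set G)) (x • (B : Set G))) :
    (A ⊓ B).index ≠ A.index * B.index := by
  intro h
  obtain ⟨z, h1, h2⟩ := meet_of_index_inf_eq A B h g x
  exact Set.disjoint_left.mp d h1 h2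

lemma not_coprime_of_disjoint [Finite G] {A B : Subgroup G} {g x : G}
    (d : Disjoint (g • (A : Set G)) (x • (B : Set G))) :
    ¬ Nat.Coprime A.index B.index := by
  intro h
  apply index_inf_ne_of_disjoint d
  have d1 : A.index ∣ (A ⊓ B).index := Subgroup.index_dvd_of_le inf_le_left
  have d2 : B.index ∣ (A ⊓ B).index := Subgroup.index_dvd_of_le inf_le_right
  have dmul : A.index * B.index ∣ (A ⊓ B).index := h.mul_dvd_of_dvd_of_dvd d1 d2
  have hpos : 0 < (A ⊓ B).index :=
    Nat.pos_of_ne_zero (Subgroup.index_ne_zero_of_finite)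
  exact le_antisymm (index_inf_le_mul A B) (Nat.le_of_dvd hpos dmul)

/-- The image of the coset `g • U` in `G ⧸ T`. -/
def Oset (T U : Subgroup G) (g : G) : Set (G ⧸ T) :=
  Set.range (fun u : U => ((g * (u : G) : G) : G ⧸ T))

lemma card_Oset (T U : Subgroup G) (g : G) : (Oset T U g).ncard = T.relIndex U := by
  classical
  let f' : (↥U) ⧸ (T.subgroupOf U) → G ⧸ T :=
    fun q => Quotient.liftOn' q (fun u : U => ((g * (u : G) : G) : G ⧸ T))
      (by
        intro x y h
        rw [QuotientGroup.leftRel_apply] at h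
        have hxy : ((x : G))⁻¹ * (y : G) ∈ T := by
          have := (Subgroup.mem_subgroupOf).mp h
          simpa using this
        apply QuotientGroup.eq.mpr
        have : (g * (x : G))⁻¹ * (g * (y : G)) = ((x : G))⁻¹ * (y : G) := by
          group
        rw [this]; exact hxy)
  have hinj : Function.Injective f' := by
    intro q₁ q₂ h
    induction q₁ using Quotient.inductionOn'
    induction q₂ using Quotient.inductionOn'
    rename_i x y
    have h' : ((g * (x : G) : G) : G ⧸ T) = ((g * (y : G) : G) : G ⧸ T) := h
    have hm : (g * (x : G))⁻¹ * (g * (y : G)) ∈ T := QuotientGroup.eq.mp h'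
    have hxy : ((x : G))⁻¹ * (y : G) ∈ T := by
      have : (g * (x : G))⁻¹ * (g * (y : G)) = ((x : G))⁻¹ * (y : G) := by group
      rwa [this] at hm
    apply Quotient.sound'
    rw [QuotientGroup.leftRel_apply]
    exact (Subgroup.mem_subgroupOf).mpr (by simpa using hxy)
  have hrange : Oset T U g = Set.range f' := by
    ext q
    constructor
    · rintro ⟨u, rfl⟩
      exact ⟨Quotient.mk'' u, rfl⟩
    · rintro ⟨q', rfl⟩
      induction q' using Quotient.inductionOn'
      rename_i u
      exact ⟨u, rfl⟩
  rw [hrange, ← Nat.card_coe_set_eq, Nat.card_range_of_injective hinj,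
    ← Subgroup.index_eq_card]
  rfl

lemma avoid {T U : Subgroup G} {t g : G}
    (d : Disjoint (g • (U : Set G)) (t • (T : Set G))) :
    ((t : G ⧸ T)) ∉ Oset T U g := by
  rintro ⟨u, hu⟩
  have h : t⁻¹ * (g * (u : G)) ∈ T := QuotientGroup.eq.mp hu.symm
  have h1 : g * (u : G) ∈ g • (U : Set G) := by
    rw [Set.mem_smul_set_iff_inv_smul_mem, smul_eq_mul]
    simpa using u.2
  have h2 : g * (u : G) ∈ t • (T : Set G) := by
    rw [Set.mem_smul_set_iff_inv_smul_mem, smul_eq_mul]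
    exact h
  exact Set.disjoint_left.mp d h1 h2

lemma Oset_subset {T U : Subgroup G} {t g : G}
    (d : Disjoint (g • (U : Set G)) (t • (T : Set G))) :
    Oset T U g ⊆ Set.univ \ {(t : G ⧸ T)} := by
  intro q hq
  refine ⟨Set.mem_univ _, ?_⟩
  intro hq'
  rw [Set.mem_singleton_iff] at hq'
  exact avoid d (hq' ▸ hq)

lemma extract {T U : Subgroup G} {g : G} {q : G ⧸ T} (hq : q ∈ Oset T U g) :
    ∃ y, y ∈ g • (U : Set G) ∧ ((y : G ⧸ T)) = q := by
  obtain ⟨u, hu⟩ := hq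
  refine ⟨g * (u : G), ?_, hu⟩
  rw [Set.mem_smul_set_iff_inv_smul_mem, smul_eq_mul]
  simpa using u.2

/-- Transfer disjointness of two cosets to disjointness of "piece" cosets inside `T`. -/
lemma piece_disjoint {T Ua Ub : Subgroup G} {xa xb ya yb : G}
    (hya : ya ∈ xa • (Ua : Set G)) (hyb : yb ∈ xb • (Ub : Set G))
    (d : Disjoint (xa • (Ua : Set G)) (xb • (Ub : Set G)))
    (y₀ : G) (hwa : y₀⁻¹ * ya ∈ T) (hwb : y₀⁻¹ * yb ∈ T) :
    Disjoint ((⟨y₀⁻¹ * ya, hwa⟩ : T) • (((Ua ⊓ T).subgroupOf T : Subgroup T) : Set T))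
             ((⟨y₀⁻¹ * yb, hwb⟩ : T) • (((Ub ⊓ T).subgroupOf T : Subgroup T) : Set T)) := by
  rw [Set.disjoint_left]
  rintro z hz1 hz2
  rw [Set.mem_smul_set_iff_inv_smul_mem, smul_eq_mul] at hz1 hz2
  have hα : ((((⟨y₀⁻¹ * ya, hwa⟩ : T))⁻¹ * z : T) : G) ∈ Ua :=
    ((Subgroup.mem_subgroupOf).mp hz1).1
  have hβ : ((((⟨y₀⁻¹ * yb, hwb⟩ : T))⁻¹ * z : T) : G) ∈ Ub :=
    ((Subgroup.mem_subgroupOf).mp hz2).1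
  -- the common element is y₀ * z
  have hya' : xa⁻¹ * ya ∈ Ua := by
    rw [Set.mem_smul_set_iff_inv_smul_mem, smul_eq_mul] at hya; exact hya
  have hyb' : xb⁻¹ * yb ∈ Ub := by
    rw [Set.mem_smul_set_iff_inv_smul_mem, smul_eq_mul] at hyb; exact hyb
  have hmema : y₀ * (z : G) ∈ xa • (Ua : Set G) := by
    rw [Set.mem_smul_set_iff_inv_smul_mem, smul_eq_mul]
    have : xa⁻¹ * (y₀ * (z : G)) = (xa⁻¹ * ya) * ((ya⁻¹ * y₀) * (z : G)) := by group
    rw [this]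
    apply Subgroup.mul_mem _ hya'
    have : (ya⁻¹ * y₀) * (z : G) = ((((⟨y₀⁻¹ * ya, hwa⟩ : T))⁻¹ * z : T) : G) := by
      simp [mul_inv_rev]
    rw [this]; exact hα
  have hmemb : y₀ * (z : G) ∈ xb • (Ub : Set G) := by
    rw [Set.mem_smul_set_iff_inv_smul_mem, smul_eq_mul]
    have : xb⁻¹ * (y₀ * (z : G)) = (xb⁻¹ * yb) * ((yb⁻¹ * y₀) * (z : G)) := by group
    rw [this]
    apply Subgroup.mul_mem _ hyb'
    have : (yb⁻¹ * y₀) * (z : G) = ((((⟨y₀⁻¹ * yb, hwb⟩ : T))⁻¹ * z : T) : G) := by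
      simp [mul_inv_rev]
    rw [this]; exact hβ
  exact Set.disjoint_left.mp d hmema hmemb

lemma relindex_subgroupOf (T A : Subgroup G) :
    ((A ⊓ T).subgroupOf T).index = A.relIndex T := by
  rw [← Subgroup.inf_relIndex_right (H := A) (K := T)]
  rfl

/-- If the images of two disjoint cosets in `G ⧸ T` share a point, the relative
indices in `T` are not coprime. -/
lemma share_not_coprime [Finite G] {T A B : Subgroup G} {x y : G}
    (d : Disjoint (x • (A : Set G)) (y • (B : Set G)))
    {q : G ⧸ T} (hqa : q ∈ Oset T A x) (hqb : q ∈ Oset T B y) :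
    ¬ Nat.Coprime (A.relIndex T) (B.relIndex T) := by
  obtain ⟨ya, hya, hqya⟩ := extract hqa
  obtain ⟨yb, hyb, hqyb⟩ := extract hqb
  have hw : (ya : G ⧸ T) = (yb : G ⧸ T) := by rw [hqya, hqyb]
  have hwa : ya⁻¹ * ya ∈ T := by rw [inv_mul_cancel]; exact one_mem T
  have hwb : ya⁻¹ * yb ∈ T := QuotientGroup.eq.mp hw
  have hd := piece_disjoint hya hyb d ya hwa hwb
  have := not_coprime_of_disjoint hd
  rwa [relindex_subgroupOf, relindex_subgroupOf] at this

/-- Pair analysis: disjoint cosets of `U` and `T` with indices `p*r` and `p*σ`,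
`gcd(r,σ)=1`, give relative indices `k*r` and `k*σ` with `1 ≤ k < p`. -/
lemma pair_k_gen [Finite G] {T U : Subgroup G} {t g : G} {p σ r : ℕ}
    (hp : 0 < p) (hσ : 0 < σ) (hr : 0 < r) (co : Nat.Coprime r σ)
    (hT : T.index = p * σ) (hU : U.index = p * r)
    (d : Disjoint (g • (U : Set G)) (t • (T : Set G))) :
    ∃ k, 1 ≤ k ∧ k < p ∧ U.relIndex T = k * r ∧ T.relIndex U = k * σ := by
  set I := (U ⊓ T).index with hI
  have e1 : U.relIndex T * T.index = I := by
    rw [← Subgroup.inf_relIndex_right (H := U) (K := T)]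
    exact Subgroup.relIndex_mul_index inf_le_right
  have e2 : T.relIndex U * U.index = I := by
    rw [← Subgroup.inf_relIndex_right (H := T) (K := U)]
    have h' : (T ⊓ U).relIndex U * U.index = (T ⊓ U).index :=
      Subgroup.relIndex_mul_index inf_le_right
    rw [h', inf_comm]
  have hdvd : p * r ∣ I := by rw [← hU]; exact Subgroup.index_dvd_of_le inf_le_left
  set n := U.relIndex T with hn
  have hIn : I = p * (n * σ) := by rw [← e1, hT]; ring
  have hrdvd : r ∣ n * σ := by
    have : p * r ∣ p * (n * σ) := hIn ▸ hdvd
    exact (Nat.mul_dvd_mul_iff_left hp).mp this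
  have hrn : r ∣ n := (Nat.Coprime.dvd_of_dvd_mul_right co) hrdvd
  obtain ⟨k, hk⟩ := hrn
  have hIk : I = k * r * (p * σ) := by rw [hIn, hk]; ring
  set m := T.relIndex U with hm
  have hmval : m = k * σ := by
    have h1 : m * (p * r) = (k * σ) * (p * r) := by
      have h2 : m * (p * r) = I := by rw [← hU]; exact e2
      rw [h2, hIk]; ring
    have hpr : 0 < p * r := Nat.mul_pos hp hr
    exact Nat.eq_of_mul_eq_mul_right hpr h1
  have hne : I ≠ U.index * T.index := index_inf_ne_of_disjoint d
  have hle : I ≤ U.index * T.index := index_inf_le_mul U T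
  have hIne0 : I ≠ 0 := Subgroup.index_ne_zero_of_finite
  have hk0 : k ≠ 0 := by
    rintro rfl
    rw [hIk] at hIne0; simp at hIne0
  have hkp : k < p := by
    have hprod : U.index * T.index = p * (r * (p * σ)) := by rw [hU, hT]; ring
    have hle' : k * (r * (p * σ)) ≤ p * (r * (p * σ)) := by
      calc k * (r * (p * σ)) = I := by rw [hIk]; ring
      _ ≤ U.index * T.index := hle
      _ = p * (r * (p * σ)) := hprod
    have hpos : 0 < r * (p * σ) := Nat.mul_pos hr (Nat.mul_pos hp hσ)
    have hkle : k ≤ p := Nat.le_of_mul_le_mul_right hle' hpos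
    rcases Nat.lt_or_ge k p with h | h
    · exact h
    · exfalso
      have : k = p := le_antisymm hkle h
      apply hne
      rw [hIk, this, hU, hT]
  refine ⟨k, Nat.one_le_iff_ne_zero.mpr hk0, hkp, ?_, hmval⟩
  show n = k * r
  rw [hk, Nat.mul_comm]

/-- Bonferroni bound for two sets in a common finite universe. -/
lemma bonf {Ω : Type*} [Finite Ω] {A B S : Set Ω} (hA : A ⊆ S) (hB : B ⊆ S) :
    A.ncard + B.ncard ≤ (A ∩ B).ncard + S.ncard := by
  have h1 := Set.ncard_inter_add_ncard_union A B (Set.toFinite _) (Set.toFinite _)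
  have h2 : (A ∪ B).ncard ≤ S.ncard :=
    Set.ncard_le_ncard (Set.union_subset hA hB) (Set.toFinite _)
  omega

/-- The `p = 2` theorem: no three pairwise disjoint cosets with indices
`2s₁, 2s₂, 2s₃` where the `sᵢ` are pairwise coprime. -/
theorem p2 {H : Type*} [Group H] [Finite H] (V₁ V₂ V₃ : Subgroup H) (c₁ c₂ c₃ : H)
    (s₁ s₂ s₃ : ℕ) (hs₁ : 0 < s₁) (hs₂ : 0 < s₂) (hs₃ : 0 < s₃)
    (c12 : Nat.Coprime s₁ s₂) (c13 : Nat.Coprime s₁ s₃) (c23 : Nat.Coprime s₂ s₃)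
    (h1 : V₁.index = 2 * s₁) (h2 : V₂.index = 2 * s₂) (h3 : V₃.index = 2 * s₃)
    (d12 : Disjoint (c₁ • (V₁ : Set H)) (c₂ • (V₂ : Set H)))
    (d13 : Disjoint (c₁ • (V₁ : Set H)) (c₃ • (V₃ : Set H)))
    (d23 : Disjoint (c₂ • (V₂ : Set H)) (c₃ • (V₃ : Set H))) : False := by
  obtain ⟨k₁, hk₁1, hk₁2, hn₁, hm₁⟩ :=
    pair_k_gen (p := 2) (by norm_num) hs₃ hs₁ c13 h3 h1 d13
  obtain ⟨k₂, hk₂1, hk₂2, hn₂, hm₂⟩ :=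
    pair_k_gen (p := 2) (by norm_num) hs₃ hs₂ c23 h3 h2 d23
  have hk₁ : k₁ = 1 := by omega
  have hk₂ : k₂ = 1 := by omega
  subst hk₁ hk₂
  rw [one_mul] at hn₁ hm₁ hn₂ hm₂
  set O₁ := Oset V₃ V₁ c₁ with hO₁def
  set O₂ := Oset V₃ V₂ c₂ with hO₂def
  have hcard₁ : O₁.ncard = s₃ := by rw [hO₁def, card_Oset, hm₁]
  have hcard₂ : O₂.ncard = s₃ := by rw [hO₂def, card_Oset, hm₂]
  have hsub₁ : O₁ ⊆ Set.univ \ {(c₃ : H ⧸ V₃)} := Oset_subset d13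
  have hsub₂ : O₂ ⊆ Set.univ \ {(c₃ : H ⧸ V₃)} := Oset_subset d23
  have hdisj : Disjoint O₁ O₂ := by
    rw [Set.disjoint_left]
    intro q hq₁ hq₂
    exact share_not_coprime d12 hq₁ hq₂ (by rw [hn₁, hn₂]; exact c12)
  have hunion : (O₁ ∪ O₂).ncard = 2 * s₃ := by
    rw [Set.ncard_union_eq hdisj (Set.toFinite _) (Set.toFinite _), hcard₁, hcard₂]; ring
  have hle : (O₁ ∪ O₂).ncard ≤ (Set.univ \ {(c₃ : H ⧸ V₃)}).ncard :=
    Set.ncard_le_ncard (Set.union_subset hsub₁ hsub₂) (Set.toFinite _)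
  have huniv : (Set.univ \ {(c₃ : H ⧸ V₃)}).ncard = 2 * s₃ - 1 := by
    rw [Set.ncard_diff_singleton_of_mem (Set.mem_univ _),
      Set.ncard_univ, ← Subgroup.index_eq_card, h3]
  omega

lemma coprime_two_of_odd {r : ℕ} (h : ¬ 2 ∣ r) : Nat.Coprime 2 r :=
  (Nat.Prime.coprime_iff_not_dvd Nat.prime_two).mpr h

/-- Arithmetic: if products `kₐ*rₐ` and `k_b*r_b` are not coprime, with `rₐ, r_b`
odd and coprime and `k ∈ {1,2}`, then both `k`s are 2. -/
lemma arith_share {ka kb ra rb : ℕ}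
    (hka : ka = 1 ∨ ka = 2) (hkb : kb = 1 ∨ kb = 2)
    (oa : ¬ 2 ∣ ra) (ob : ¬ 2 ∣ rb) (cab : Nat.Coprime ra rb)
    (h : ¬ Nat.Coprime (ka * ra) (kb * rb)) : ka = 2 ∧ kb = 2 := by
  rcases hka with rfl | rfl <;> rcases hkb with rfl | rfl
  · exact absurd (by simpa using cab) h
  · exfalso; apply h
    simp only [one_mul]
    exact Nat.Coprime.mul_right ((coprime_two_of_odd oa).symm) cab
  · exfalso; apply h
    simp only [one_mul]
    exact (Nat.Coprime.mul_right ((coprime_two_of_odd ob).symm) cab.symm).symm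
  · exact ⟨rfl, rfl⟩

/-- Counting case (2,2,1). -/
lemma case221 {Ω : Type*} [Finite Ω] {Oa Ob Oc : Set Ω} {ω : Ω} {ρ : ℕ} (hρ : 0 < ρ)
    (ha : Oa.ncard = 2 * ρ) (hb : Ob.ncard = 2 * ρ) (hc : Oc.ncard = ρ)
    (sa : Oa ⊆ Set.univ \ {ω}) (sb : Ob ⊆ Set.univ \ {ω}) (sc : Oc ⊆ Set.univ \ {ω})
    (hcard : Nat.card Ω = 3 * ρ)
    (dac : Disjoint Oa Oc) (dbc : Disjoint Ob Oc) : False := by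
  set S := (Set.univ \ {ω}) \ Oc with hS
  have hSa : Oa ⊆ S := fun q hq => ⟨sa hq, Set.disjoint_left.mp dac hq⟩
  have hSb : Ob ⊆ S := fun q hq => ⟨sb hq, Set.disjoint_left.mp dbc hq⟩
  have huniv : (Set.univ \ {ω}).ncard = 3 * ρ - 1 := by
    rw [Set.ncard_diff_singleton_of_mem (Set.mem_univ _),
      Set.ncard_univ, hcard]
  have hScard : S.ncard = (3 * ρ - 1) - ρ := by
    rw [hS, Set.ncard_diff sc (Set.toFinite _), huniv, hc]
  have hbonf := bonf hSa hSb
  have hinter : (Oa ∩ Ob).ncard ≤ 2 * ρ := by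
    rw [← ha]
    exact Set.ncard_le_ncard Set.inter_subset_left (Set.toFinite _)
  omega

/-- Counting case (2,2,2): there is a common point of all three sets. -/
lemma case222 {Ω : Type*} [Finite Ω] {Oa Ob Oc : Set Ω} {ω : Ω} {ρ : ℕ} (hρ : 0 < ρ)
    (ha : Oa.ncard = 2 * ρ) (hb : Ob.ncard = 2 * ρ) (hc : Oc.ncard = 2 * ρ)
    (sa : Oa ⊆ Set.univ \ {ω}) (sb : Ob ⊆ Set.univ \ {ω}) (sc : Oc ⊆ Set.univ \ {ω})
    (hcard : Nat.card Ω = 3 * ρ) : (Oa ∩ Ob ∩ Oc).Nonempty := by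
  have huniv : (Set.univ \ {ω}).ncard = 3 * ρ - 1 := by
    rw [Set.ncard_diff_singleton_of_mem (Set.mem_univ _),
      Set.ncard_univ, hcard]
  have h1 := bonf sa sb
  have h2 := bonf (S := Set.univ \ {ω}) (A := Oa ∩ Ob) (B := Oc)
    (fun q hq => sa hq.1) sc
  apply Set.nonempty_of_ncard_ne_zero
  omega

/-- Counting case: at most one `k = 2`, all three occupancy sets pairwise disjoint. -/
lemma case_le1 {Ω : Type*} [Finite Ω] {Oa Ob Oc : Set Ω} {ω : Ω} {ρ : ℕ} (hρ : 0 < ρ)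
    (ha : ρ ≤ Oa.ncard) (hb : ρ ≤ Ob.ncard) (hc : ρ ≤ Oc.ncard)
    (sa : Oa ⊆ Set.univ \ {ω}) (sb : Ob ⊆ Set.univ \ {ω}) (sc : Oc ⊆ Set.univ \ {ω})
    (hcard : Nat.card Ω = 3 * ρ)
    (dab : Disjoint Oa Ob) (dac : Disjoint Oa Oc) (dbc : Disjoint Ob Oc) : False := by
  have huniv : (Set.univ \ {ω}).ncard = 3 * ρ - 1 := by
    rw [Set.ncard_diff_singleton_of_mem (Set.mem_univ _),
      Set.ncard_univ, hcard]
  have hd : Disjoint (Oa ∪ Ob) Oc := Set.disjoint_union_left.mpr ⟨dac, dbc⟩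
  have hu : (Oa ∪ Ob ∪ Oc).ncard = Oa.ncard + Ob.ncard + Oc.ncard := by
    rw [Set.ncard_union_eq hd (Set.toFinite _) (Set.toFinite _),
      Set.ncard_union_eq dab (Set.toFinite _) (Set.toFinite _)]
  have hle : (Oa ∪ Ob ∪ Oc).ncard ≤ (Set.univ \ {ω}).ncard :=
    Set.ncard_le_ncard (Set.union_subset (Set.union_subset sa sb) sc) (Set.toFinite _)
  omega

/-- The vertex argument: `T` together with three cosets whose `r`-parameters are odd. -/
lemma vertex [Finite G] (T Ua Ub Uc : Subgroup G) (t xa xb xc : G)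
    (ρ ra rb rc : ℕ)
    (hρ : 0 < ρ) (hra : 0 < ra) (hrb : 0 < rb) (hrc : 0 < rc)
    (oa : ¬ 2 ∣ ra) (ob : ¬ 2 ∣ rb) (oc : ¬ 2 ∣ rc)
    (cab : Nat.Coprime ra rb) (cac : Nat.Coprime ra rc) (cbc : Nat.Coprime rb rc)
    (caρ : Nat.Coprime ra ρ) (cbρ : Nat.Coprime rb ρ) (ccρ : Nat.Coprime rc ρ)
    (hT : T.index = 3 * ρ)
    (hUa : Ua.index = 3 * ra) (hUb : Ub.index = 3 * rb) (hUc : Uc.index = 3 * rc)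
    (dat : Disjoint (xa • (Ua : Set G)) (t • (T : Set G)))
    (dbt : Disjoint (xb • (Ub : Set G)) (t • (T : Set G)))
    (dct : Disjoint (xc • (Uc : Set G)) (t • (T : Set G)))
    (dab : Disjoint (xa • (Ua : Set G)) (xb • (Ub : Set G)))
    (dac : Disjoint (xa • (Ua : Set G)) (xc • (Uc : Set G)))
    (dbc : Disjoint (xb • (Ub : Set G)) (xc • (Uc : Set G))) : False := by
  obtain ⟨ka, hka1, hka2, hna, hma⟩ :=
    pair_k_gen (p := 3) (by norm_num) hρ hra caρ hT hUa dat
  obtain ⟨kb, hkb1, hkb2, hnb, hmb⟩ :=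
    pair_k_gen (p := 3) (by norm_num) hρ hrb cbρ hT hUb dbt
  obtain ⟨kc, hkc1, hkc2, hnc, hmc⟩ :=
    pair_k_gen (p := 3) (by norm_num) hρ hrc ccρ hT hUc dct
  have hka' : ka = 1 ∨ ka = 2 := by omega
  have hkb' : kb = 1 ∨ kb = 2 := by omega
  have hkc' : kc = 1 ∨ kc = 2 := by omega
  set Oa := Oset T Ua xa with hOadef
  set Ob := Oset T Ub xb with hObdef
  set Oc := Oset T Uc xc with hOcdef
  have hcarda : Oa.ncard = ka * ρ := by rw [hOadef, card_Oset, hma]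
  have hcardb : Ob.ncard = kb * ρ := by rw [hObdef, card_Oset, hmb]
  have hcardc : Oc.ncard = kc * ρ := by rw [hOcdef, card_Oset, hmc]
  have hsa : Oa ⊆ Set.univ \ {(t : G ⧸ T)} := Oset_subset dat
  have hsb : Ob ⊆ Set.univ \ {(t : G ⧸ T)} := Oset_subset dbt
  have hsc : Oc ⊆ Set.univ \ {(t : G ⧸ T)} := Oset_subset dct
  have hcard : Nat.card (G ⧸ T) = 3 * ρ := by rw [← Subgroup.index_eq_card, hT]
  -- sharing forces both k's equal to 2
  have share_ab : ¬ Disjoint Oa Ob → ka = 2 ∧ kb = 2 := by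
    intro h
    obtain ⟨q, hqa, hqb⟩ := Set.not_disjoint_iff.mp h
    have := share_not_coprime dab hqa hqb
    rw [hna, hnb] at this
    exact arith_share hka' hkb' oa ob cab this
  have share_ac : ¬ Disjoint Oa Oc → ka = 2 ∧ kc = 2 := by
    intro h
    obtain ⟨q, hqa, hqc⟩ := Set.not_disjoint_iff.mp h
    have := share_not_coprime dac hqa hqc
    rw [hna, hnc] at this
    exact arith_share hka' hkc' oa oc cac this
  have share_bc : ¬ Disjoint Ob Oc → kb = 2 ∧ kc = 2 := by
    intro h
    obtain ⟨q, hqb, hqc⟩ := Set.not_disjoint_iff.mp h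
    have := share_not_coprime dbc hqb hqc
    rw [hnb, hnc] at this
    exact arith_share hkb' hkc' ob oc cbc this
  -- the (2,2,2) case: triple intersection gives p2 inside T
  have triple_case : ka = 2 → kb = 2 → kc = 2 → False := by
    intro h2a h2b h2c
    have hne : (Oa ∩ Ob ∩ Oc).Nonempty := by
      apply case222 hρ _ _ _ hsa hsb hsc hcard
      · rw [hcarda, h2a]
      · rw [hcardb, h2b]
      · rw [hcardc, h2c]
    obtain ⟨q, ⟨hqa, hqb⟩, hqc⟩ := hne
    obtain ⟨ya, hya, hqya⟩ := extract hqa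
    obtain ⟨yb, hyb, hqyb⟩ := extract hqb
    obtain ⟨yc, hyc, hqyc⟩ := extract hqc
    have hwa : ya⁻¹ * ya ∈ T := by rw [inv_mul_cancel]; exact one_mem T
    have hwb : ya⁻¹ * yb ∈ T := QuotientGroup.eq.mp (by rw [hqya, hqyb])
    have hwc : ya⁻¹ * yc ∈ T := QuotientGroup.eq.mp (by rw [hqya, hqyc])
    have pdab := piece_disjoint hya hyb dab ya hwa hwb
    have pdac := piece_disjoint hya hyc dac ya hwa hwc
    have pdbc := piece_disjoint hyb hyc dbc ya hwb hwc
    refine p2 (H := T) ((Ua ⊓ T).subgroupOf T) ((Ub ⊓ T).subgroupOf T)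
      ((Uc ⊓ T).subgroupOf T) ⟨ya⁻¹ * ya, hwa⟩ ⟨ya⁻¹ * yb, hwb⟩ ⟨ya⁻¹ * yc, hwc⟩
      ra rb rc hra hrb hrc cab cac cbc ?_ ?_ ?_ pdab pdac pdbc
    · rw [relindex_subgroupOf, hna, h2a]
    · rw [relindex_subgroupOf, hnb, h2b]
    · rw [relindex_subgroupOf, hnc, h2c]
  -- main case analysis
  rcases hka' with h2a | h2a <;> rcases hkb' with h2b | h2b <;> rcases hkc' with h2c | h2c
  -- (1,1,1)
  · refine case_le1 hρ ?_ ?_ ?_ hsa hsb hsc hcard ?_ ?_ ?_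
    · rw [hcarda, h2a, one_mul]
    · rw [hcardb, h2b, one_mul]
    · rw [hcardc, h2c, one_mul]
    · by_contra h; exact absurd (share_ab h).1 (by omega)
    · by_contra h; exact absurd (share_ac h).1 (by omega)
    · by_contra h; exact absurd (share_bc h).1 (by omega)
  -- (1,1,2)
  · refine case_le1 hρ ?_ ?_ ?_ hsa hsb hsc hcard ?_ ?_ ?_
    · rw [hcarda, h2a, one_mul]
    · rw [hcardb, h2b, one_mul]
    · rw [hcardc, h2c]; omega
    · by_contra h; exact absurd (share_ab h).1 (by omega)
    · by_contra h; exact absurd (share_ac h).1 (by omega)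
    · by_contra h; exact absurd (share_bc h).1 (by omega)
  -- (1,2,1)
  · refine case_le1 hρ ?_ ?_ ?_ hsa hsb hsc hcard ?_ ?_ ?_
    · rw [hcarda, h2a, one_mul]
    · rw [hcardb, h2b]; omega
    · rw [hcardc, h2c, one_mul]
    · by_contra h; exact absurd (share_ab h).1 (by omega)
    · by_contra h; exact absurd (share_ac h).1 (by omega)
    · by_contra h; exact absurd (share_bc h).2 (by omega)
  -- (1,2,2): pair (b,c) may share; but a has k=1 : pattern (2,2,1) with roles b,c vs a
  · by_cases hbc' : Disjoint Ob Oc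
    · refine case_le1 hρ ?_ ?_ ?_ hsa hsb hsc hcard ?_ ?_ hbc'
      · rw [hcarda, h2a, one_mul]
      · rw [hcardb, h2b]; omega
      · rw [hcardc, h2c]; omega
      · by_contra h; exact absurd (share_ab h).1 (by omega)
      · by_contra h; exact absurd (share_ac h).1 (by omega)
    · -- pattern (2,2,1) with Oa playing the "1" role
      refine case221 (Oa := Ob) (Ob := Oc) (Oc := Oa) hρ ?_ ?_ ?_ hsb hsc hsa hcard ?_ ?_
      · rw [hcardb, h2b]
      · rw [hcardc, h2c]
      · rw [hcarda, h2a, one_mul]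
      · by_contra h
        exact absurd (share_ab (fun hd => h hd.symm)).1 (by omega)
      · by_contra h
        exact absurd (share_ac (fun hd => h hd.symm)).1 (by omega)
  -- (2,1,1)
  · refine case_le1 hρ ?_ ?_ ?_ hsa hsb hsc hcard ?_ ?_ ?_
    · rw [hcarda, h2a]; omega
    · rw [hcardb, h2b, one_mul]
    · rw [hcardc, h2c, one_mul]
    · by_contra h; exact absurd (share_ab h).2 (by omega)
    · by_contra h; exact absurd (share_ac h).2 (by omega)
    · by_contra h; exact absurd (share_bc h).1 (by omega)
  -- (2,1,2)
  · by_cases hac' : Disjoint Oa Oc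
    · refine case_le1 hρ ?_ ?_ ?_ hsa hsb hsc hcard ?_ hac' ?_
      · rw [hcarda, h2a]; omega
      · rw [hcardb, h2b, one_mul]
      · rw [hcardc, h2c]; omega
      · by_contra h; exact absurd (share_ab h).2 (by omega)
      · by_contra h; exact absurd (share_bc h).1 (by omega)
    · refine case221 (Oa := Oa) (Ob := Oc) (Oc := Ob) hρ ?_ ?_ ?_ hsa hsc hsb hcard ?_ ?_
      · rw [hcarda, h2a]
      · rw [hcardc, h2c]
      · rw [hcardb, h2b, one_mul]
      · by_contra h; exact absurd (share_ab (fun hd => h hd)).2 (by omega)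
      · by_contra h
        exact absurd (share_bc (fun hd => h hd.symm)).1 (by omega)
  -- (2,2,1)
  · by_cases hab' : Disjoint Oa Ob
    · refine case_le1 hρ ?_ ?_ ?_ hsa hsb hsc hcard hab' ?_ ?_
      · rw [hcarda, h2a]; omega
      · rw [hcardb, h2b]; omega
      · rw [hcardc, h2c, one_mul]
      · by_contra h; exact absurd (share_ac h).2 (by omega)
      · by_contra h; exact absurd (share_bc h).2 (by omega)
    · refine case221 (Oa := Oa) (Ob := Ob) (Oc := Oc) hρ ?_ ?_ ?_ hsa hsb hsc hcard ?_ ?_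
      · rw [hcarda, h2a]
      · rw [hcardb, h2b]
      · rw [hcardc, h2c, one_mul]
      · by_contra h; exact absurd (share_ac (fun hd => h hd)).2 (by omega)
      · by_contra h; exact absurd (share_bc (fun hd => h hd)).2 (by omega)
  -- (2,2,2)
  · exact triple_case h2a h2b h2c

end NotGHarmonic

open NotGHarmonic in
theorem not_G_harmonic_3r1_3r2_3r3_3r4
    (r₁ r₂ r₃ r₄ : ℕ) (hr₁ : 0 < r₁) (hr₂ : 0 < r₂) (hr₃ : 0 < r₃) (hr₄ : 0 < r₄)
    (h12 : Nat.Coprime r₁ r₂) (h13 : Nat.Coprime r₁ r₃) (h14 : Nat.Coprime r₁ r₄)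
    (h23 : Nat.Coprime r₂ r₃) (h24 : Nat.Coprime r₂ r₄) (h34 : Nat.Coprime r₃ r₄)
    (G : Type*) [Group G] [Fintype G] :
    ¬ ∃ (U₁ U₂ U₃ U₄ : Subgroup G) (g₁ g₂ g₃ g₄ : G),
      U₁.index = 3 * r₁ ∧ U₂.index = 3 * r₂ ∧ U₃.index = 3 * r₃ ∧ U₄.index = 3 * r₄ ∧
      Disjoint (g₁ • (U₁ : Set G)) (g₂ • (U₂ : Set G)) ∧
      Disjoint (g₁ • (U₁ : Set G)) (g₃ • (U₃ : Set G)) ∧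
      Disjoint (g₁ • (U₁ : Set G)) (g₄ • (U₄ : Set G)) ∧
      Disjoint (g₂ • (U₂ : Set G)) (g₃ • (U₃ : Set G)) ∧
      Disjoint (g₂ • (U₂ : Set G)) (g₄ • (U₄ : Set G)) ∧
      Disjoint (g₃ • (U₃ : Set G)) (g₄ • (U₄ : Set G)) := by
  rintro ⟨U₁, U₂, U₃, U₄, g₁, g₂, g₃, g₄, hU₁, hU₂, hU₃, hU₄,
    d12, d13, d14, d23, d24, d34⟩
  have notboth : ∀ {a b : ℕ}, Nat.Coprime a b → 2 ∣ a → 2 ∣ b → False := by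
    intro a b hco ha hb
    have := Nat.dvd_gcd ha hb
    rw [Nat.Coprime] at hco
    rw [hco] at this
    omega
  by_cases e1 : 2 ∣ r₁
  · -- vertex 1, others r₂ r₃ r₄ odd
    exact vertex U₁ U₂ U₃ U₄ g₁ g₂ g₃ g₄ r₁ r₂ r₃ r₄ hr₁ hr₂ hr₃ hr₄
      (fun h => notboth h12 e1 h) (fun h => notboth h13 e1 h) (fun h => notboth h14 e1 h)
      h23 h24 h34 h12.symm h13.symm h14.symm
      hU₁ hU₂ hU₃ hU₄ d12.symm d13.symm d14.symm d23 d24 d34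
  by_cases e2 : 2 ∣ r₂
  · exact vertex U₂ U₁ U₃ U₄ g₂ g₁ g₃ g₄ r₂ r₁ r₃ r₄ hr₂ hr₁ hr₃ hr₄
      e1 (fun h => notboth h23 e2 h) (fun h => notboth h24 e2 h)
      h13 h14 h34 h12 h23.symm h24.symm
      hU₂ hU₁ hU₃ hU₄ d12 d23.symm d24.symm d13 d14 d34
  by_cases e3 : 2 ∣ r₃
  · exact vertex U₃ U₁ U₂ U₄ g₃ g₁ g₂ g₄ r₃ r₁ r₂ r₄ hr₃ hr₁ hr₂ hr₄
      e1 e2 (fun h => notboth h34 e3 h)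
      h12 h14 h24 h13 h23 h34.symm
      hU₃ hU₁ hU₂ hU₄ d13 d23 d34.symm d12 d14 d24
  · exact vertex U₄ U₁ U₂ U₃ g₄ g₁ g₂ g₃ r₄ r₁ r₂ r₃ hr₄ hr₁ hr₂ hr₃
      e1 e2 e3
      h12 h13 h23 h14 h24 h34
      hU₄ hU₁ hU₂ hU₃ d14 d24 d34 d12 d13 d23
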